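/- Let (X, 𝒜, μ) be a measure space and D ⊆ ℝ a set of parameter values. For each θ' ∈ D let p(·;θ'): X → ℝ be measurable with p(·;θ') ≥ 0 and ∫ p(x;θ') dμ(x) = 1. Fix θ ∈ D with p(x;θ) > 0 for μ-a.e. x, and let g: X → ℝ be an unbiased estimator (∫ p(x;θ')|g(x)| dμ(x) < ∞ and ∫ p(x;θ') g(x) dμ(x) = θ' for every θ' ∈ D) with ∫ p(x;θ)(g(x)−θ)² dμ(x) < ∞. Let N ≥ 1, let θ_{1,i}, θ_{2,i} ∈ D for i = 1,…,N, set t_i = θ_{1,i} − θ_{2,i} and q_i(x) = p(x;θ_{1,i}) − p(x;θ_{2,i}), assume ∫ q_i(x)²/p(x;θ) dμ(x) < ∞ for every i, and assume the N×N matrix B with entries B_{ij} = ∫ q_i(x)q_j(x)/p(x;θ) dμ(x) is invertible. Then ∫ p(x;θ)(g(x)−θ)² dμ(x) ≥ tᵀ B⁻¹ t, where t = (t₁,…,t_N)ᵀ. -/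

import Mathlib

open MeasureTheory Matrix

/-- Lower Bounds Series A (ABS): the mean-squared error of any unbiased estimator is at
least `tᵀ B⁻¹ t`, where `t i = θ1 i - θ2 i`, `q i = p(·;θ1 i) - p(·;θ2 i)` and
`B i j = ∫ q i q j / p(·;θ) dμ`. -/
theorem lower_bound_series_A {X : Type*} [MeasurableSpace X]
    (μ : Measure X) (D : Set ℝ)
    (p : ℝ → X → ℝ)
    (hpm : ∀ θ' ∈ D, Measurable (p θ'))
    (hp0 : ∀ θ' ∈ D, ∀ x, 0 ≤ p θ' x)
    (hp1 : ∀ θ' ∈ D, ∫ x, p θ' x ∂μ = 1)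
    (θ : ℝ) (hθ : θ ∈ D) (hθpos : ∀ᵐ x ∂μ, 0 < p θ x)
    (g : X → ℝ) (hgm : Measurable g)
    (hgint : ∀ θ' ∈ D, Integrable (fun x => p θ' x * g x) μ)
    (hunbiased : ∀ θ' ∈ D, ∫ x, p θ' x * g x ∂μ = θ')
    (hmse : Integrable (fun x => p θ x * (g x - θ)^2) μ)
    (N : ℕ) (hN : 1 ≤ N)
    (θ1 θ2 : Fin N → ℝ) (hθ1 : ∀ i, θ1 i ∈ D) (hθ2 : ∀ i, θ2 i ∈ D)
    (t : Fin N → ℝ) (ht : ∀ i, t i = θ1 i - θ2 i)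
    (q : Fin N → X → ℝ) (hq : ∀ i x, q i x = p (θ1 i) x - p (θ2 i) x)
    (hqint : ∀ i, Integrable (fun x => (q i x)^2 / p θ x) μ)
    (B : Matrix (Fin N) (Fin N) ℝ)
    (hB : ∀ i j, B i j = ∫ x, q i x * q j x / p θ x ∂μ)
    (hBinv : IsUnit B.det) :
    t ⬝ᵥ (B⁻¹ *ᵥ t) ≤ ∫ x, p θ x * (g x - θ)^2 ∂μ := by
  classical
  set u : Fin N → ℝ := B⁻¹ *ᵥ t with hu
  have hBu : B *ᵥ u = t := by
    rw [hu, Matrix.mulVec_mulVec, Matrix.mul_nonsing_inv B hBinv, Matrix.one_mulVec]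
  -- each density is integrable
  have hpint : ∀ θ' ∈ D, Integrable (p θ') μ := by
    intro θ' hθ'
    by_contra h
    exact one_ne_zero ((hp1 θ' hθ').symm.trans (integral_undef h))
  -- q is measurable
  have hqm : ∀ i, Measurable (q i) := by
    intro i
    have hqe : q i = fun x => p (θ1 i) x - p (θ2 i) x := funext (hq i)
    rw [hqe]
    exact (hpm _ (hθ1 i)).sub (hpm _ (hθ2 i))
  -- (g - θ) * q i is integrable with integral t i
  have hsplit : ∀ i, (fun x => (g x - θ) * q i x) =
      fun x => (p (θ1 i) x * g x - θ * p (θ1 i) x)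
        - (p (θ2 i) x * g x - θ * p (θ2 i) x) := by
    intro i; funext x; rw [hq i x]; ring
  have I1 : ∀ i, Integrable (fun x => p (θ1 i) x * g x - θ * p (θ1 i) x) μ :=
    fun i => (hgint _ (hθ1 i)).sub ((hpint _ (hθ1 i)).const_mul θ)
  have I2 : ∀ i, Integrable (fun x => p (θ2 i) x * g x - θ * p (θ2 i) x) μ :=
    fun i => (hgint _ (hθ2 i)).sub ((hpint _ (hθ2 i)).const_mul θ)
  have hgq_int : ∀ i, Integrable (fun x => (g x - θ) * q i x) μ := by
    intro i
    rw [hsplit i]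
    exact (I1 i).sub (I2 i)
  have hgq_val : ∀ i, ∫ x, (g x - θ) * q i x ∂μ = t i := by
    intro i
    have e1 : ∫ x, (p (θ1 i) x * g x - θ * p (θ1 i) x) ∂μ = θ1 i - θ := by
      rw [integral_sub (hgint _ (hθ1 i)) ((hpint _ (hθ1 i)).const_mul θ),
        integral_const_mul, hunbiased _ (hθ1 i), hp1 _ (hθ1 i)]
      ring
    have e2 : ∫ x, (p (θ2 i) x * g x - θ * p (θ2 i) x) ∂μ = θ2 i - θ := by
      rw [integral_sub (hgint _ (hθ2 i)) ((hpint _ (hθ2 i)).const_mul θ),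
        integral_const_mul, hunbiased _ (hθ2 i), hp1 _ (hθ2 i)]
      ring
    rw [hsplit i, integral_sub (I1 i) (I2 i), e1, e2, ht i]
    ring
  -- q i * q j / p θ is integrable
  have hqq_int : ∀ i j, Integrable (fun x => q i x * q j x / p θ x) μ := by
    intro i j
    apply Integrable.mono' (((hqint i).add (hqint j)).div_const 2)
      ((((hqm i).mul (hqm j)).div (hpm θ hθ)).aestronglyMeasurable)
    filter_upwards [hθpos] with x hx
    have h1 : |q i x * q j x| ≤ ((q i x)^2 + (q j x)^2) / 2 := by
      rcases abs_cases (q i x * q j x) with ⟨he, _⟩ | ⟨he, _⟩ <;>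
        nlinarith [sq_nonneg (q i x - q j x), sq_nonneg (q i x + q j x)]
    have habs : |q i x * q j x / p θ x| = |q i x * q j x| / p θ x := by
      rw [abs_div, abs_of_pos hx]
    rw [Real.norm_eq_abs]
    show |q i x * q j x / p θ x| ≤ ((q i x)^2 / p θ x + (q j x)^2 / p θ x) / 2
    rw [habs]
    rw [div_le_iff₀ hx]
    calc |q i x * q j x| ≤ ((q i x)^2 + (q j x)^2) / 2 := h1
      _ = ((q i x)^2 / p θ x + (q j x)^2 / p θ x) / 2 * p θ x := by
          field_simp
  -- the combined function S
  set S : X → ℝ := fun x => ∑ i, u i * q i x with hS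
  have hS1e : (fun x => (g x - θ) * S x) = fun x => ∑ i, u i * ((g x - θ) * q i x) := by
    funext x; rw [hS]; simp only [Finset.mul_sum]
    exact Finset.sum_congr rfl fun i _ => by ring
  have hS1int : Integrable (fun x => (g x - θ) * S x) μ := by
    rw [hS1e]
    exact integrable_finset_sum _ fun i _ => (hgq_int i).const_mul (u i)
  have hS1val : ∫ x, (g x - θ) * S x ∂μ = u ⬝ᵥ t := by
    rw [hS1e, integral_finset_sum _ fun i _ => (hgq_int i).const_mul (u i)]
    simp only [integral_const_mul, hgq_val]
    rfl
  have hS2e : (fun x => (S x)^2 / p θ x) =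
      fun x => ∑ i, ∑ j, u i * u j * (q i x * q j x / p θ x) := by
    funext x
    rw [hS]
    simp only [sq, Finset.sum_mul_sum, Finset.sum_div]
    exact Finset.sum_congr rfl fun i _ => Finset.sum_congr rfl fun j _ => by ring
  have hS2int : Integrable (fun x => (S x)^2 / p θ x) μ := by
    rw [hS2e]
    exact integrable_finset_sum _ fun i _ => integrable_finset_sum _ fun j _ =>
      (hqq_int i j).const_mul _
  have hS2val : ∫ x, (S x)^2 / p θ x ∂μ = u ⬝ᵥ t := by
    rw [hS2e, integral_finset_sum _ fun i _ => integrable_finset_sum _ fun j _ =>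
      (hqq_int i j).const_mul _]
    have hstep : ∀ i ∈ Finset.univ, ∫ x, (∑ j, u i * u j * (q i x * q j x / p θ x)) ∂μ
        = ∑ j, u i * u j * B i j := by
      intro i _
      rw [integral_finset_sum _ fun j _ => (hqq_int i j).const_mul _]
      exact Finset.sum_congr rfl fun j _ => by rw [integral_const_mul, hB]
    rw [Finset.sum_congr rfl hstep]
    have h2 : u ⬝ᵥ t = u ⬝ᵥ (B *ᵥ u) := by rw [hBu]
    rw [h2]
    simp only [dotProduct, Matrix.mulVec, Finset.mul_sum]
    exact Finset.sum_congr rfl fun i _ => Finset.sum_congr rfl fun j _ => by ring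
  -- nonnegativity of the key integral
  have hkey : 0 ≤ ∫ x, p θ x * (g x - θ - S x / p θ x)^2 ∂μ :=
    integral_nonneg fun x => mul_nonneg (hp0 θ hθ x) (sq_nonneg _)
  have hcongr : (fun x => p θ x * (g x - θ - S x / p θ x)^2) =ᵐ[μ]
      fun x => p θ x * (g x - θ)^2 - 2 * ((g x - θ) * S x) + (S x)^2 / p θ x := by
    filter_upwards [hθpos] with x hx
    have hne : p θ x ≠ 0 := ne_of_gt hx
    field_simp
    ring
  have Ia : Integrable (fun x => p θ x * (g x - θ)^2 - 2 * ((g x - θ) * S x)) μ :=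
    hmse.sub (hS1int.const_mul 2)
  have hkey_eq : ∫ x, p θ x * (g x - θ - S x / p θ x)^2 ∂μ
      = ∫ x, p θ x * (g x - θ)^2 ∂μ - 2 * ∫ x, (g x - θ) * S x ∂μ
        + ∫ x, (S x)^2 / p θ x ∂μ := by
    rw [integral_congr_ae hcongr, integral_add Ia hS2int,
      integral_sub hmse (hS1int.const_mul 2), integral_const_mul]
  have hts : t ⬝ᵥ u = u ⬝ᵥ t := dotProduct_comm t u
  rw [hts]
  rw [hkey_eq, hS1val, hS2val] at hkey
  linarith
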